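/- Let P be a right LCM monoid, and p, q, r ∈ P with r = qk. Then [r,r] is weakly fixed by [p,q] (i.e., [p,q] f [q,p] f ≠ 0 for every nonzero idempotent f ≤ [r,r]) if and only if for all a ∈ P, qkaP ∩ pkaP ≠ ∅. -/

import Mathlib

/-- The principal right ideal `pP` of a monoid. -/
def rI {M : Type*} [Monoid M] (p : M) : Set M := {x | ∃ y, x = p * y}

/-- A right LCM monoid: left cancellative, and any two principal right ideals are
either disjoint or intersect in another principal right ideal. -/
class RightLCM (M : Type*) extends Monoid M where
  mul_left_cancel' : ∀ a b c : M, a * b = a * c → b = c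
  lcm : ∀ p q : M, rI p ∩ rI q = ∅ ∨ ∃ r : M, rI p ∩ rI q = rI r

namespace RightLCM

variable {M : Type*} [RightLCM M]

/-- The equivalence relation `(p,q) ∼ (pu,qu)` for units `u`. -/
def peq (x y : M × M) : Prop := ∃ u : M, IsUnit u ∧ x.1 = y.1 * u ∧ x.2 = y.2 * u

theorem peq_equivalence : Equivalence (peq (M := M)) := by
  constructor
  · intro x; exact ⟨1, isUnit_one, by simp, by simp⟩
  · rintro x y ⟨u, hu, h1, h2⟩
    obtain ⟨w, hw⟩ := hu
    subst hw
    exact ⟨↑w⁻¹, Units.isUnit _, by rw [h1, mul_assoc, w.mul_inv, mul_one],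
      by rw [h2, mul_assoc, w.mul_inv, mul_one]⟩
  · rintro x y z ⟨u, hu, h1, h2⟩ ⟨v, hv, h3, h4⟩
    exact ⟨v * u, hv.mul hu, by rw [h1, h3, mul_assoc], by rw [h2, h4, mul_assoc]⟩

instance pSetoid : Setoid (M × M) := ⟨peq, peq_equivalence⟩

/-- The inverse semigroup `S = {[p,q] : p,q ∈ P} ∪ {0}` associated to a right LCM monoid. -/
abbrev S (M : Type*) [RightLCM M] := WithZero (Quotient (pSetoid (M := M)))

/-- The class `[p,q]` as an element of `S M`. -/
def cls (p q : M) : S M := (Quotient.mk (pSetoid (M := M)) (p, q) : Quotient (pSetoid (M := M)))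

open scoped Classical in
/-- Product of two representatives: `[a,b][c,d] = [ab', dc']` when `bP ∩ cP = rP` with
`bb' = cc' = r`, and `0` when `bP ∩ cP = ∅`. -/
noncomputable def mulPair (x y : M × M) : S M :=
  if h : rI x.2 ∩ rI y.1 = ∅ then 0
  else
    have hr := (RightLCM.lcm x.2 y.1).resolve_left h
    have hmem : Classical.choose hr ∈ rI x.2 ∩ rI y.1 :=
      (Set.ext_iff.mp (Classical.choose_spec hr) _).mpr ⟨1, (mul_one _).symm⟩
    cls (x.1 * Classical.choose hmem.1) (y.2 * Classical.choose hmem.2)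

/-- The multiplication on `S M` (with `0` absorbing). -/
noncomputable def smul : S M → S M → S M
  | none, _ => 0
  | some _, none => 0
  | some a, some b => mulPair a.out b.out

/-- The involution `[p,q]* = [q,p]` on `S M`. -/
noncomputable def star : S M → S M
  | none => 0
  | some a => cls a.out.2 a.out.1

end RightLCM


namespace RightLCM

variable {M : Type*} [RightLCM M]

theorem lcancel {a b c : M} (h : a * b = a * c) : b = c := mul_left_cancel' a b c h

theorem self_mem_rI (p : M) : p ∈ rI p := ⟨1, (mul_one p).symm⟩

theorem rI_mul_subset (p q : M) : rI (p * q) ⊆ rI p := by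
  rintro x ⟨y, rfl⟩; exact ⟨q * y, mul_assoc _ _ _⟩

theorem rI_mul_unit {u : M} (hu : IsUnit u) (p : M) : rI (p * u) = rI p := by
  obtain ⟨w, rfl⟩ := hu
  ext x
  constructor
  · exact fun h => rI_mul_subset _ _ h
  · rintro ⟨y, rfl⟩
    exact ⟨↑w⁻¹ * y, by rw [mul_assoc, ← mul_assoc (w : M), w.mul_inv, one_mul]⟩

theorem rI_eq_unit {a b : M} (h : rI a = rI b) : ∃ u : M, IsUnit u ∧ a = b * u := by
  obtain ⟨s, hs⟩ : a ∈ rI b := h ▸ self_mem_rI a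
  obtain ⟨t, ht⟩ : b ∈ rI a := h.symm ▸ self_mem_rI b
  have hst : s * t = 1 := by
    apply lcancel (a := b)
    rw [← mul_assoc, ← hs, ← ht, mul_one]
  have hts : t * s = 1 := by
    apply lcancel (a := a)
    rw [← mul_assoc, ← ht, ← hs, mul_one]
  exact ⟨s, ⟨⟨s, t, hst, hts⟩, rfl⟩, hs⟩

theorem rI_inter_mul (p w : M) : rI p ∩ rI (p * w) = rI (p * w) :=
  Set.inter_eq_right.mpr (rI_mul_subset p w)

theorem rI_nonempty (m : M) : rI m ≠ (∅ : Set M) := fun h =>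
  Set.eq_empty_iff_forall_notMem.mp h m (self_mem_rI m)

theorem cls_ne_zero (a b : M) : cls a b ≠ 0 := by
  simp [cls]

theorem cls_eq_iff {a b c d : M} :
    cls a b = cls c d ↔ ∃ u : M, IsUnit u ∧ a = c * u ∧ b = d * u := by
  unfold cls
  rw [WithZero.coe_inj, Quotient.eq]
  rfl

theorem mul_unit_cancel {u x y : M} (hu : IsUnit u) (h : x * u = y * u) : x = y := by
  obtain ⟨w, rfl⟩ := hu
  have := congrArg (· * (↑w⁻¹ : M)) h
  simpa [mul_assoc] using this

theorem mulPair_eq_zero {x y : M × M} {a b c d : M}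
    (hx : peq x (a, b)) (hy : peq y (c, d)) (h : rI b ∩ rI c = ∅) :
    mulPair x y = 0 := by
  obtain ⟨u, hu, hx1, hx2⟩ := hx
  obtain ⟨v, hv, hy1, hy2⟩ := hy
  have hz : rI x.2 ∩ rI y.1 = ∅ := by
    rw [hx2, hy1, rI_mul_unit hu, rI_mul_unit hv, h]
  simp [mulPair, hz]

theorem mulPair_eq {x y : M × M} {a b c d m s t : M}
    (hx : peq x (a, b)) (hy : peq y (c, d))
    (hm : rI b ∩ rI c = rI m) (hs : m = b * s) (ht : m = c * t) :
    mulPair x y = cls (a * s) (d * t) := by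
  obtain ⟨u, hu, hx1, hx2⟩ := hx
  obtain ⟨v, hv, hy1, hy2⟩ := hy
  have hset : rI x.2 ∩ rI y.1 = rI m := by
    rw [hx2, hy1, rI_mul_unit hu, rI_mul_unit hv, hm]
  have hne : ¬ (rI x.2 ∩ rI y.1 = ∅) := by
    rw [hset]; exact rI_nonempty m
  unfold mulPair
  rw [dif_neg hne]
  set hr := (RightLCM.lcm x.2 y.1).resolve_left hne with hrdef
  set m' := Classical.choose hr with hm'def
  have hspec : rI x.2 ∩ rI y.1 = rI m' := Classical.choose_spec hr
  obtain ⟨w, hw, hmw⟩ : ∃ w : M, IsUnit w ∧ m' = m * w :=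
    rI_eq_unit (hspec ▸ hset)
  have hmem : m' ∈ rI x.2 ∩ rI y.1 :=
    (Set.ext_iff.mp hspec _).mpr ⟨1, (mul_one _).symm⟩
  have hs' : m' = x.2 * Classical.choose hmem.1 := Classical.choose_spec hmem.1
  have ht' : m' = y.1 * Classical.choose hmem.2 := Classical.choose_spec hmem.2
  have e1 : u * Classical.choose hmem.1 = s * w := by
    apply lcancel (a := b)
    rw [← mul_assoc, ← hx2, ← hs', hmw, hs, mul_assoc]
  have e2 : v * Classical.choose hmem.2 = t * w := by
    apply lcancel (a := c)
    rw [← mul_assoc, ← hy1, ← ht', hmw, ht, mul_assoc]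
  have g1 : x.1 * Classical.choose hmem.1 = a * s * w := by
    rw [hx1, mul_assoc, e1, mul_assoc]
  have g2 : y.2 * Classical.choose hmem.2 = d * t * w := by
    rw [hy2, mul_assoc, e2, mul_assoc]
  -- identify the goal's choose terms with ours via proof irrelevance
  exact (by rw [g1, g2] : cls (x.1 * Classical.choose hmem.1) (y.2 * Classical.choose hmem.2) = cls (a*s*w) (d*t*w)).trans
    (cls_eq_iff.mpr ⟨w, hw, rfl, rfl⟩)

theorem smul_cls_eq {a b c d m s t : M}
    (hm : rI b ∩ rI c = rI m) (hs : m = b * s) (ht : m = c * t) :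
    smul (cls a b) (cls c d) = cls (a * s) (d * t) := by
  show mulPair _ _ = _
  exact mulPair_eq (Quotient.mk_out (s := pSetoid) (a, b)) (Quotient.mk_out (s := pSetoid) (c, d)) hm hs ht

theorem smul_cls_zero {a b c d : M} (h : rI b ∩ rI c = ∅) :
    smul (cls a b) (cls c d) = 0 := by
  show mulPair _ _ = _
  exact mulPair_eq_zero (Quotient.mk_out (s := pSetoid) (a, b)) (Quotient.mk_out (s := pSetoid) (c, d)) h

theorem exists_cls {f : S M} (hf : f ≠ 0) : ∃ x y : M, f = cls x y := by
  match f with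
  | none => exact absurd rfl hf
  | some c => exact ⟨c.out.1, c.out.2, by simp [cls, Quotient.out_eq]; rfl⟩

end RightLCM

namespace RightLCM

variable {M : Type*} [RightLCM M]

theorem chain_eq (p q k a : M) :
    smul (smul (cls p q) (cls (q * k * a) (q * k * a))) (cls q p)
      = cls (p * (k * a)) (p * (k * a)) := by
  have hm1 : rI q ∩ rI (q * k * a) = rI (q * k * a) := by
    rw [mul_assoc]; exact rI_inter_mul q (k * a)
  have step1 : smul (cls p q) (cls (q * k * a) (q * k * a))
      = cls (p * (k * a)) (q * k * a) := by
    have := smul_cls_eq (a := p) (d := q * k * a) hm1 (mul_assoc q k a)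
      (mul_one (q * k * a)).symm
    simpa using this
  rw [step1]
  have hm2 : rI (q * k * a) ∩ rI q = rI (q * k * a) := by
    rw [Set.inter_comm, mul_assoc]; exact rI_inter_mul q (k * a)
  have := smul_cls_eq (a := p * (k * a)) (d := p) hm2 (mul_one (q * k * a)).symm
    (mul_assoc q k a)
  simpa using this

end RightLCM

open RightLCM in
/-- For `r = qk`, the idempotent `[r,r]` is weakly fixed by `[p,q]`
(i.e. `[p,q]f[q,p]f ≠ 0` for every nonzero idempotent `f ≤ [r,r]`) iff
`qkaP ∩ pkaP ≠ ∅` for all `a ∈ P`. -/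
theorem stmt11 {M : Type*} [RightLCM M] (p q k r : M) (hr : r = q * k) :
    (∀ f : S M, f ≠ 0 → smul f f = f → smul (cls r r) f = f →
      smul (smul (smul (cls p q) f) (cls q p)) f ≠ 0) ↔
    (∀ a : M, rI (q * k * a) ∩ rI (p * k * a) ≠ ∅) := by
  subst hr
  constructor
  · intro h a hcon
    have hf0 : (cls (q*k*a) (q*k*a) : S M) ≠ 0 := cls_ne_zero _ _
    have hidem : smul (cls (q*k*a) (q*k*a)) (cls (q*k*a) (q*k*a)) = cls (q*k*a) (q*k*a) := by
      have := smul_cls_eq (a := q*k*a) (d := q*k*a) (Set.inter_self (rI (q*k*a)))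
        (mul_one (q*k*a)).symm (mul_one (q*k*a)).symm
      simpa using this
    have hle : smul (cls (q*k) (q*k)) (cls (q*k*a) (q*k*a)) = cls (q*k*a) (q*k*a) := by
      have := smul_cls_eq (a := q*k) (d := q*k*a) (rI_inter_mul (q*k) a)
        rfl (mul_one (q*k*a)).symm
      simpa using this
    apply h _ hf0 hidem hle
    rw [chain_eq]
    apply smul_cls_zero
    rw [← mul_assoc, Set.inter_comm]
    exact hcon
  · intro h f hf0 hidem hle
    obtain ⟨x, y, rfl⟩ := exists_cls hf0
    -- f is an idempotent, so x = y
    have hxy : rI y ∩ rI x ≠ ∅ := by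
      intro hz; rw [smul_cls_zero hz] at hidem; exact hf0 hidem.symm
    obtain ⟨m, hm⟩ := (RightLCM.lcm y x).resolve_left hxy
    have hmem : m ∈ rI y ∩ rI x := (Set.ext_iff.mp hm m).mpr (self_mem_rI m)
    obtain ⟨s, hs⟩ := hmem.1
    obtain ⟨t, ht⟩ := hmem.2
    obtain ⟨u, hu, e1, e2⟩ := cls_eq_iff.mp ((smul_cls_eq hm hs ht).symm.trans hidem)
    have hsu : s = u := lcancel e1
    have htu : t = u := lcancel e2
    rw [hsu] at hs
    rw [htu] at ht
    have hxyeq : x = y := mul_unit_cancel hu (ht.symm.trans hs)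
    subst hxyeq
    -- f ≤ [r,r], so x = q*k*a for some a
    have hrx : rI (q*k) ∩ rI x ≠ ∅ := by
      intro hz; rw [smul_cls_zero hz] at hle; exact hf0 hle.symm
    obtain ⟨m2, hm2⟩ := (RightLCM.lcm (q*k) x).resolve_left hrx
    have hmem2 : m2 ∈ rI (q*k) ∩ rI x := (Set.ext_iff.mp hm2 m2).mpr (self_mem_rI m2)
    obtain ⟨s2, hs2⟩ := hmem2.1
    obtain ⟨t2, ht2⟩ := hmem2.2
    obtain ⟨u2, hu2, f1, f2⟩ := cls_eq_iff.mp ((smul_cls_eq hm2 hs2 ht2).symm.trans hle)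
    obtain ⟨w, rfl⟩ := hu2
    have hx : x = q * k * (s2 * ↑w⁻¹) := by
      have := congrArg (· * (↑w⁻¹ : M)) f1
      simpa [mul_assoc] using this.symm
    rw [hx, chain_eq]
    obtain ⟨m3, hm3⟩ := (RightLCM.lcm (q*k*(s2 * ↑w⁻¹)) (p*k*(s2 * ↑w⁻¹))).resolve_left
      (h (s2 * ↑w⁻¹))
    have hmem3 : m3 ∈ rI (q*k*(s2 * ↑w⁻¹)) ∩ rI (p*k*(s2 * ↑w⁻¹)) :=
      (Set.ext_iff.mp hm3 m3).mpr (self_mem_rI m3)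
    obtain ⟨s3, hs3⟩ := hmem3.2
    obtain ⟨t3, ht3⟩ := hmem3.1
    have hm3' : rI (p * (k * (s2 * ↑w⁻¹))) ∩ rI (q * k * (s2 * ↑w⁻¹)) = rI m3 := by
      rw [← mul_assoc, Set.inter_comm]; exact hm3
    have hs3' : m3 = p * (k * (s2 * ↑w⁻¹)) * s3 := by rw [← mul_assoc]; exact hs3
    rw [smul_cls_eq hm3' hs3' ht3]
    exact cls_ne_zero _ _
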